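/- The GCD output is a maximum-likelihood solution: if GCD terminates because the current partial TEP e_R^{(ℓ)} satisfies γ(e_R^{(ℓ)}) ≥ γ(e_opt), where partial TEPs are enumerated in order of non-decreasing γ and e_opt is the lightest valid TEP found among re-encoded patterns e^{(j)} = (s - e_R^{(j)} P^T, e_R^{(j)}) for j < ℓ, then γ(e_opt) ≤ γ(e) for all valid TEPs e. -/

import Mathlib

/-- Soft weight of a binary vector with respect to nonnegative weights. -/
def softW {α : Type*} [Fintype α] (w : α → ℝ) (e : α → ZMod 2) : ℝ :=
  ∑ i, ((e i).val : ℝ) * w i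

/-- Hamming weight of a binary vector. -/
def hamW {α : Type*} [Fintype α] [DecidableEq α] (e : α → ZMod 2) : ℕ :=
  (Finset.univ.filter fun i => e i ≠ 0).card

/-- `a` is strictly prior to `b` in lexicographic order (first coordinate most significant). -/
def lexPrior {n : ℕ} (a b : Fin n → ZMod 2) : Prop :=
  ∃ i, (∀ j, j < i → a j = b j) ∧ (a i).val < (b i).val

lemma softW_sum_split (m k : ℕ) (w : Fin m ⊕ Fin k → ℝ) (e : Fin m ⊕ Fin k → ZMod 2) :
    softW w e = softW (fun i => w (Sum.inl i)) (fun i => e (Sum.inl i))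
      + softW (fun t => w (Sum.inr t)) (fun t => e (Sum.inr t)) := by
  simp [softW, Fintype.sum_sum_type]

theorem stmt_5 (m k : ℕ) (P : Matrix (Fin m) (Fin k) (ZMod 2)) (s : Fin m → ZMod 2)
    (w : Fin m ⊕ Fin k → ℝ) (hw : ∀ i, 0 ≤ w i)
    (enum : Fin (2 ^ k) → Fin k → ZMod 2) (henum : Function.Bijective enum)
    (hmono : ∀ j j' : Fin (2 ^ k), j ≤ j' →
      softW (fun t => w (Sum.inr t)) (enum j) ≤ softW (fun t => w (Sum.inr t)) (enum j'))
    (ℓ : Fin (2 ^ k)) (eopt : Fin m ⊕ Fin k → ZMod 2)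
    (hopt : ∃ j, j < ℓ ∧ eopt = Sum.elim (s - P.mulVec (enum j)) (enum j))
    (hbest : ∀ j, j < ℓ →
      softW w eopt ≤ softW w (Sum.elim (s - P.mulVec (enum j)) (enum j)))
    (hstop : softW w eopt ≤ softW (fun t => w (Sum.inr t)) (enum ℓ)) :
    ∀ e, (Matrix.fromCols 1 P).mulVec e = s → softW w eopt ≤ softW w e := by
  intro e he
  set eR : Fin k → ZMod 2 := fun t => e (Sum.inr t) with heR
  set eL : Fin m → ZMod 2 := fun i => e (Sum.inl i) with heL
  have hL : eL = s - P.mulVec eR := by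
    funext i
    have := congrFun he i
    simp [Matrix.fromCols, Matrix.mulVec, dotProduct, Fintype.sum_sum_type,
      Matrix.one_apply, eL, eR] at this ⊢
    rw [eq_sub_iff_add_eq]
    exact this
  obtain ⟨j, hj⟩ := henum.2 eR
  have hesplit : e = Sum.elim eL eR := by
    funext x; cases x <;> rfl
  have hdecomp : softW w e = softW (fun i => w (Sum.inl i)) eL
      + softW (fun t => w (Sum.inr t)) eR := softW_sum_split m k w e
  have hLnn : 0 ≤ softW (fun i => w (Sum.inl i)) eL := by
    apply Finset.sum_nonneg
    intro i _
    exact mul_nonneg (by positivity) (hw _)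
  rcases lt_or_ge j ℓ with hlt | hge
  · have := hbest j hlt
    rwa [hj, ← hL, ← hesplit] at this
  · calc softW w eopt ≤ softW (fun t => w (Sum.inr t)) (enum ℓ) := hstop
      _ ≤ softW (fun t => w (Sum.inr t)) (enum j) := hmono ℓ j hge
      _ = softW (fun t => w (Sum.inr t)) eR := by rw [hj]
      _ ≤ softW w e := by rw [hdecomp]; linarith
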